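/- Let G be a connected weighted undirected graph with incidence matrix B and positive weight matrix 𝒜. Let z = x + iy ∈ ℂ^n with ‖Bᵀz‖_∞ ≤ γ < π/2 (entrywise complex modulus). Then the complex matrix L_{cos(z)} := B𝒜[cos(Bᵀz)]Bᵀ has rank n−1. -/

import Mathlib

open Matrix

lemma cos_re_eq (z : ℂ) : (Complex.cos z).re = Real.cos z.re * Real.cosh z.im := by
  rw [Complex.cos_eq]
  simp [Complex.cos_ofReal_re, Complex.cosh_ofReal_re, Complex.sin_ofReal_re,
    Complex.sinh_ofReal_re, Complex.cos_ofReal_im, Complex.cosh_ofReal_im,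
    Complex.sin_ofReal_im, Complex.sinh_ofReal_im]

lemma dot_aux {n m : ℕ} (C : Matrix (Fin n) (Fin m) ℂ)
    (hC : ∀ i e, (starRingEnd ℂ) (C i e) = C i e) (v : Fin n → ℂ) (f : Fin m → ℂ) :
    ∑ i, (starRingEnd ℂ) (v i) * (C.mulVec f i) =
      ∑ e, (starRingEnd ℂ) (C.transpose.mulVec v e) * f e := by
  simp only [Matrix.mulVec, dotProduct, Matrix.transpose_apply, Finset.mul_sum,
    map_sum, Finset.sum_mul]
  rw [Finset.sum_comm]
  apply Finset.sum_congr rfl; intro i _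
  apply Finset.sum_congr rfl; intro e _
  rw [_root_.map_mul, hC]; ring

theorem rank_complex_cos_laplacian
    (n m : ℕ) (B : Matrix (Fin n) (Fin m) ℝ) (a : Fin m → ℝ)
    (ha : ∀ e, 0 < a e)
    (hB : ∀ e : Fin m, ∃ i j : Fin n, i ≠ j ∧ B i e = 1 ∧ B j e = -1 ∧
      ∀ k, k ≠ i → k ≠ j → B k e = 0)
    (hconn : ∀ v : Fin n → ℝ, B.transpose.mulVec v = 0 → ∃ c, ∀ i, v i = c)
    (γ : ℝ) (hγ : γ < Real.pi / 2)
    (z : Fin n → ℂ)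
    (hz : ∀ e, ‖(B.map (Complex.ofReal)).transpose.mulVec z e‖ ≤ γ) :
    ((B.map (Complex.ofReal)) * Matrix.diagonal (fun e => (a e : ℂ)) *
      Matrix.diagonal (fun e => Complex.cos ((B.map (Complex.ofReal)).transpose.mulVec z e)) *
      (B.map (Complex.ofReal)).transpose).rank = n - 1 := by
  set Bc : Matrix (Fin n) (Fin m) ℂ := B.map Complex.ofReal with hBc
  set w : Fin m → ℂ := Bc.transpose.mulVec z with hw
  set d : Fin m → ℂ := fun e => (a e : ℂ) * Complex.cos (w e) with hd
  set L : Matrix (Fin n) (Fin n) ℂ :=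
    Bc * Matrix.diagonal (fun e => (a e : ℂ)) *
      Matrix.diagonal (fun e => Complex.cos (w e)) * Bc.transpose with hL
  -- positivity of real parts
  have hdre : ∀ e, 0 < (d e).re := by
    intro e
    have habs := hz e
    have h1 : |(w e).re| ≤ γ := le_trans (Complex.abs_re_le_norm _) habs
    have h2 : 0 < Real.cos (w e).re := by
      apply Real.cos_pos_of_mem_Ioo
      constructor
      · nlinarith [abs_le.mp h1, Real.pi_pos]
      · nlinarith [abs_le.mp h1]
    have h3 : (d e).re = a e * ((Complex.cos (w e)).re) := by
      simp [hd, Complex.mul_re, Complex.ofReal_re, Complex.ofReal_im]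
    rw [h3, cos_re_eq]
    exact mul_pos (ha e) (mul_pos h2 (Real.cosh_pos _))
  -- Bc entries are real
  have hstarBc : ∀ i e, (starRingEnd ℂ) (Bc i e) = Bc i e := by
    intro i e; simp [hBc, Matrix.map_apply]
  -- L as composition
  have hLmul : ∀ v : Fin n → ℂ,
      L.mulVec v = Bc.mulVec (fun e => d e * (Bc.transpose.mulVec v e)) := by
    intro v
    rw [hL, Matrix.mul_assoc Bc, Matrix.diagonal_mul_diagonal,
      ← Matrix.mulVec_mulVec, ← Matrix.mulVec_mulVec]
    have hdiag : (Matrix.diagonal fun i => (a i : ℂ) * Complex.cos (w i)).mulVec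
        (Bc.transpose.mulVec v) = fun e => d e * (Bc.transpose.mulVec v e) := by
      funext e
      rw [Matrix.mulVec_diagonal]
    rw [hdiag]
  -- kernel characterization
  have hker : ∀ v : Fin n → ℂ, L.mulVec v = 0 ↔ Bc.transpose.mulVec v = 0 := by
    intro v
    constructor
    · intro h0
      have key : ∑ i, (starRingEnd ℂ) (v i) * (L.mulVec v i) =
          ∑ e, (starRingEnd ℂ) (Bc.transpose.mulVec v e) * (d e * (Bc.transpose.mulVec v e)) := by
        rw [hLmul v]
        exact dot_aux Bc hstarBc v _
      rw [h0] at key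
      simp only [Pi.zero_apply, mul_zero, Finset.sum_const_zero] at key
      have key2 : (0 : ℂ) = ∑ e, d e * (Complex.normSq (Bc.transpose.mulVec v e) : ℂ) := by
        rw [key]
        apply Finset.sum_congr rfl
        intro e _
        rw [Complex.normSq_eq_conj_mul_self]
        ring
      have hre : ∑ e, (d e).re * Complex.normSq (Bc.transpose.mulVec v e) = 0 := by
        have h4 := congrArg Complex.re key2
        simp only [Complex.zero_re, Complex.re_sum] at h4
        rw [← h4.symm]
        symm
        apply Finset.sum_congr rfl
        intro e _
        simp [Complex.mul_re, Complex.ofReal_re, Complex.ofReal_im]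
      have hzero : ∀ e ∈ Finset.univ, (d e).re * Complex.normSq (Bc.transpose.mulVec v e) = 0 := by
        apply (Finset.sum_eq_zero_iff_of_nonneg ?_).mp hre
        intro e _
        exact mul_nonneg (hdre e).le (Complex.normSq_nonneg _)
      funext e
      have he := hzero e (Finset.mem_univ e)
      have h5 : Complex.normSq (Bc.transpose.mulVec v e) = 0 := by
        rcases mul_eq_zero.mp he with h | h
        · exact absurd h (ne_of_gt (hdre e))
        · exact h
      simpa using Complex.normSq_eq_zero.mp h5
    · intro h0
      rw [hLmul v, h0]
      funext i
      simp [Matrix.mulVec, dotProduct]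
  -- column sums of Bc vanish
  have hones : Bc.transpose.mulVec (fun _ => (1 : ℂ)) = 0 := by
    funext e
    obtain ⟨i, j, hij, hBi, hBj, hB0⟩ := hB e
    simp only [Matrix.mulVec, dotProduct, Matrix.transpose_apply, mul_one, Pi.zero_apply]
    have hsub : ∑ k, Bc k e = ∑ k ∈ ({i, j} : Finset (Fin n)), Bc k e := by
      symm
      apply Finset.sum_subset (Finset.subset_univ _)
      intro k _ hk
      simp only [Finset.mem_insert, Finset.mem_singleton, not_or] at hk
      simp [hBc, Matrix.map_apply, hB0 k hk.1 hk.2]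
    rw [hsub, Finset.sum_pair hij]
    simp [hBc, Matrix.map_apply, hBi, hBj]
  -- kernel of Bcᵀ = span of ones
  have hker2 : ∀ v : Fin n → ℂ, Bc.transpose.mulVec v = 0 ↔
      v ∈ Submodule.span ℂ {fun _ => (1 : ℂ)} := by
    intro v
    constructor
    · intro h0
      have hre : B.transpose.mulVec (fun i => (v i).re) = 0 := by
        funext e
        have h6 := congrArg (fun f => (f e).re) h0
        simp only [Pi.zero_apply, Complex.zero_re] at h6
        simp only [Matrix.mulVec, dotProduct, Matrix.transpose_apply,
          Pi.zero_apply] at h6 ⊢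
        rw [← h6]
        simp [Complex.re_sum, hBc, Matrix.map_apply, Complex.mul_re]
      have him : B.transpose.mulVec (fun i => (v i).im) = 0 := by
        funext e
        have h6 := congrArg (fun f => (f e).im) h0
        simp only [Pi.zero_apply, Complex.zero_im] at h6
        simp only [Matrix.mulVec, dotProduct, Matrix.transpose_apply,
          Pi.zero_apply] at h6 ⊢
        rw [← h6]
        simp [Complex.im_sum, hBc, Matrix.map_apply, Complex.mul_im]
      obtain ⟨c₁, hc₁⟩ := hconn _ hre
      obtain ⟨c₂, hc₂⟩ := hconn _ him
      rw [Submodule.mem_span_singleton]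
      refine ⟨⟨c₁, c₂⟩, ?_⟩
      funext i
      simp only [Pi.smul_apply, smul_eq_mul, mul_one]
      refine Complex.ext ?_ ?_
      · simpa using (hc₁ i).symm
      · simpa using (hc₂ i).symm
    · intro hv
      rw [Submodule.mem_span_singleton] at hv
      obtain ⟨c, hc⟩ := hv
      rw [← hc]
      rw [Matrix.mulVec_smul, hones]
      simp
  -- handle n = 0
  rcases Nat.eq_zero_or_pos n with hn | hn
  · subst hn
    have : L.rank ≤ 0 := le_trans (Matrix.rank_le_card_height L) (by simp)
    omega
  -- kernel of L = span of ones
  have hkerL : LinearMap.ker L.mulVecLin = Submodule.span ℂ {fun _ => (1 : ℂ)} := by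
    ext v
    rw [LinearMap.mem_ker, Matrix.mulVecLin_apply, hker v, hker2 v]
  have hfr : Module.finrank ℂ (LinearMap.ker L.mulVecLin) = 1 := by
    rw [hkerL]
    apply finrank_span_singleton
    intro h
    have := congrFun h ⟨0, hn⟩
    simp at this
  have hrn := LinearMap.finrank_range_add_finrank_ker L.mulVecLin
  rw [hfr] at hrn
  have hdim : Module.finrank ℂ (Fin n → ℂ) = n := by simp
  rw [hdim] at hrn
  have hrk : L.rank = Module.finrank ℂ (LinearMap.range L.mulVecLin) := rfl
  omega
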